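/- arXiv:1808.09533 — 3 statements merged into one kernel-verified Lean document; each statement's English description precedes it below -/
import Mathlib

section
/- Let (X, d, d_u) be a topometric space with d complete, d and d_u bounded by 1, and d_u lower semicontinuous with respect to d. Then the metric d̂_u(f,h) = ∫₀¹ d_u(f(ω),h(ω)) dω on L⁰([0,1],X) is lower semicontinuous with respect to the topology induced by d̂(f,h) = ∫₀¹ d(f(ω),h(ω)) dω; that is, for every r > 0 the set {(f,h) : d̂_u(f,h) > r} is open in L⁰([0,1],X)² with the d̂-topology. -/
open MeasureTheory

open Set Filter Topology TopologicalSpace Cardinal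


lemma card_meas_le : Cardinal.mk {t : Set unitInterval | MeasurableSet t} ≤ Cardinal.continuum := by
  obtain ⟨b, bc, -, hb⟩ := TopologicalSpace.exists_countable_basis unitInterval
  have he : (inferInstance : MeasurableSpace unitInterval) = .generateFrom b := by
    rw [BorelSpace.measurable_eq (α := unitInterval), hb.borel_eq_generateFrom]
  have : {t : Set unitInterval | MeasurableSet t}
      = {t | @MeasurableSet unitInterval (.generateFrom b) t} := by
    rw [← he]
  rw [this]
  exact MeasurableSpace.cardinal_measurableSet_le_continuum
    (bc.le_aleph0.trans Cardinal.aleph0_le_continuum)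

lemma countable_of_separated {X : Type*} [MetricSpace X] [MeasurableSpace X] [BorelSpace X]
    {f : unitInterval → X} (hf : Measurable f) {ε : ℝ} (hε : 0 < ε) {D : Set X}
    (hD : D ⊆ Set.range f) (hsep : ∀ x ∈ D, ∀ y ∈ D, x ≠ y → ε ≤ dist x y) :
    D.Countable := by
  classical
  by_contra hunc
  -- fibers
  set A : D → Set unitInterval := fun d => f ⁻¹' Metric.ball (d : X) (ε/2) with hA
  have hdisj : ∀ d d' : D, d ≠ d' → ∀ ω, ω ∈ A d → ω ∈ A d' → False := by
    intro d d' hne ω h1 h2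
    have h3 : dist (d : X) (d' : X) < ε := by
      calc dist (d : X) (d' : X) ≤ dist (d : X) (f ω) + dist (f ω) (d' : X) := dist_triangle _ _ _
        _ < ε/2 + ε/2 := by
            rw [dist_comm (d : X)]
            exact add_lt_add h1 h2
        _ = ε := by ring
    exact absurd (hsep _ d.2 _ d'.2 (fun hc => hne (Subtype.ext hc))) (not_le.2 h3)
  have hubor : ∀ S : Set D, MeasurableSet (⋃ d ∈ S, A d) := by
    intro S
    have : (⋃ d ∈ S, A d) = f ⁻¹' (⋃ d ∈ S, Metric.ball (d : X) (ε/2)) := by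
      simp [hA, preimage_iUnion]
    rw [this]
    exact hf (isOpen_biUnion (fun _ _ => Metric.isOpen_ball)).measurableSet
  -- choose preimages
  have hex : ∀ d : D, ∃ ω, f ω = (d : X) := fun d => hD d.2
  choose t ht using hex
  have htA : ∀ d : D, t d ∈ A d := by
    intro d
    show f (t d) ∈ Metric.ball (d : X) (ε/2)
    rw [Metric.mem_ball, ht d, dist_self]
    positivity
  have htinj : Function.Injective t := by
    intro d d' he
    apply Subtype.ext; rw [← ht d, ← ht d', he]
  -- the function g
  let g : unitInterval → ℝ := fun ω => if h : ∃ d : D, ω ∈ A d then (t h.choose : ℝ) else 2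
  have hg_on : ∀ (d : D) (ω : unitInterval), ω ∈ A d → g ω = (t d : ℝ) := by
    intro d ω hω
    have h : ∃ d : D, ω ∈ A d := ⟨d, hω⟩
    have : h.choose = d := by
      by_contra hc
      exact hdisj _ _ hc ω h.choose_spec hω
    simp only [g, dif_pos h, this]
  have hg_meas : Measurable g := by
    intro B hB
    have : g ⁻¹' B = (⋃ d ∈ {d : D | (t d : ℝ) ∈ B}, A d)
        ∪ (if (2:ℝ) ∈ B then (⋃ d : D, A d)ᶜ else ∅) := by
      ext ω
      by_cases h : ∃ d : D, ω ∈ A d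
      · obtain ⟨d, hd⟩ := h
        have hg := hg_on d ω hd
        simp only [mem_preimage, hg, mem_union, mem_iUnion, mem_setOf_eq]
        constructor
        · intro hB2; left; exact ⟨d, hB2, hd⟩
        · rintro (⟨d', hd', hωd'⟩ | hrest)
          · have : d' = d := by
              by_contra hc; exact hdisj _ _ hc ω hωd' hd
            rwa [← this]
          · exfalso
            rcases lt_or_ge 2 0 with _ | _
            · linarith
            · by_cases h2 : (2:ℝ) ∈ B
              · rw [if_pos h2] at hrest
                exact hrest (mem_iUnion.2 ⟨d, hd⟩)
              · rw [if_neg h2] at hrest; exact hrest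
      · have hg : g ω = 2 := by simp only [g, dif_neg h]
        simp only [mem_preimage, hg, mem_union, mem_iUnion, mem_setOf_eq]
        constructor
        · intro h2; right; rw [if_pos h2]
          intro hc
          obtain ⟨d, hd⟩ := mem_iUnion.1 hc
          exact h ⟨d, hd⟩
        · rintro (⟨d', _, hωd'⟩ | hrest)
          · exact absurd ⟨d', hωd'⟩ h
          · by_cases h2 : (2:ℝ) ∈ B
            · exact h2
            · rw [if_neg h2] at hrest; exact absurd hrest (notMem_empty ω)
    rw [this]
    refine (hubor _).union ?_
    split
    · exact (hubor univ).compl.congr (by simp)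
    · exact MeasurableSet.empty
  -- the set T of chosen points
  set T : Set unitInterval := {ω | g ω = (ω : ℝ)} with hTdef
  have hT : MeasurableSet T := measurableSet_eq_fun hg_meas measurable_subtype_coe
  have hTr : T = Set.range t := by
    ext ω
    constructor
    · intro hω
      by_cases h : ∃ d : D, ω ∈ A d
      · obtain ⟨d, hd⟩ := h
        have h1 := hg_on d ω hd
        have hco : (t d : ℝ) = (ω : ℝ) := by rw [← h1]; exact hω
        exact ⟨d, Subtype.ext hco⟩
      · exfalso
        have hg2 : g ω = 2 := by simp only [g, dif_neg h]
        have h2 : (ω : ℝ) = 2 := by rw [← hg2]; exact hω.symm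
        have := ω.2.2
        rw [h2] at this
        norm_num at this
    · rintro ⟨d, rfl⟩
      show g (t d) = ((t d : unitInterval) : ℝ)
      exact hg_on d (t d) (htA d)
  have hTunc : ¬ Countable ↥T := by
    intro hc
    apply hunc
    rw [hTr] at hc
    have : Countable ↥D := Countable.of_equiv _ (Equiv.ofInjective t htinj).symm
    exact Set.countable_coe_iff.1 this
  haveI hTsb : StandardBorelSpace ↥T := hT.standardBorel
  have e : ↥T ≃ᵐ ℝ := PolishSpace.measurableEquivOfNotCountable hTunc (not_countable (α := ℝ))
  have hcardT : Cardinal.mk ↥T = Cardinal.continuum := by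
    rw [Cardinal.mk_congr e.toEquiv, Cardinal.mk_real]
  have hl : Cardinal.lift.{u_1} (Cardinal.mk ↥T) = Cardinal.lift.{0} (Cardinal.mk ↥D) := by
    rw [hTr]; exact Cardinal.mk_range_eq_lift htinj
  have hcard2 : Cardinal.continuum ≤ Cardinal.mk ↥D := by
    rw [hcardT, Cardinal.lift_continuum, Cardinal.lift_uzero] at hl
    exact hl.le
  have key : ∀ S1 S2 : Set D, (⋃ d ∈ S1, A d) = (⋃ d ∈ S2, A d) → S1 ⊆ S2 := by
    intro S1 S2 hS d hd
    have h1 : t d ∈ ⋃ d' ∈ S2, A d' := by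
      rw [← hS]; exact Set.mem_biUnion hd (htA d)
    obtain ⟨d', hd', hmem1, hmem2⟩ := by simpa using h1
    have heq : (⟨d', hd'⟩ : D) = d := by
      by_contra hc; exact hdisj _ _ hc _ hmem2 (htA d)
    exact heq ▸ hmem1
  have hΨ : Function.Injective (fun S : Set D =>
      (⟨⋃ d ∈ S, A d, hubor S⟩ : {V : Set unitInterval | MeasurableSet V})) := by
    intro S1 S2 hS
    simp only [Subtype.mk.injEq] at hS
    exact le_antisymm (key _ _ hS) (key _ _ hS.symm)
  have h2 : Cardinal.lift.{0} (Cardinal.mk (Set ↥D))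
      ≤ Cardinal.lift.{u_1} (Cardinal.mk ↥{V : Set unitInterval | MeasurableSet V}) :=
    Cardinal.lift_mk_le'.mpr ⟨⟨_, hΨ⟩⟩
  have h3 : Cardinal.lift.{u_1} (Cardinal.mk ↥{V : Set unitInterval | MeasurableSet V})
      ≤ Cardinal.lift.{u_1} Cardinal.continuum := Cardinal.lift_le.2 card_meas_le
  have hfin : (2:Cardinal) ^ Cardinal.continuum ≤ Cardinal.continuum :=
    calc (2:Cardinal) ^ Cardinal.continuum ≤ 2 ^ Cardinal.mk ↥D :=
          Cardinal.power_le_power_left (by norm_num) hcard2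
      _ = Cardinal.mk (Set ↥D) := Cardinal.mk_set.symm
      _ = Cardinal.lift.{0} (Cardinal.mk (Set ↥D)) := by rw [Cardinal.lift_uzero]
      _ ≤ Cardinal.lift.{u_1} Cardinal.continuum := h2.trans h3
      _ = Cardinal.continuum := Cardinal.lift_continuum
  exact absurd hfin (not_le.2 (Cardinal.cantor _))

lemma sep_range {X : Type*} [MetricSpace X] [MeasurableSpace X] [BorelSpace X]
    {f : unitInterval → X} (hf : Measurable f) :
    TopologicalSpace.IsSeparable (Set.range f) := by
  have hmax : ∀ n : ℕ, ∃ M : Set X, (M ⊆ Set.range f ∧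
      (∀ x ∈ M, ∀ y ∈ M, x ≠ y → ((n:ℝ)+1)⁻¹ ≤ dist x y)) ∧
      ∀ x ∈ Set.range f, x ∉ M → ∃ y ∈ M, dist x y < ((n:ℝ)+1)⁻¹ := by
    intro n
    set S : Set (Set X) :=
      {M | M ⊆ Set.range f ∧ ∀ x ∈ M, ∀ y ∈ M, x ≠ y → ((n:ℝ)+1)⁻¹ ≤ dist x y} with hS
    obtain ⟨M, hMS, hMmax⟩ : ∃ M, Maximal (· ∈ S) M := by
      apply zorn_subset
      intro c hcS hchain
      refine ⟨⋃₀ c, ⟨?_, ?_⟩, fun s hs => subset_sUnion_of_mem hs⟩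
      · exact sUnion_subset fun s hs => (hcS hs).1
      · rintro x ⟨s, hs, hxs⟩ y ⟨s', hs', hys'⟩ hne
        rcases hchain.total hs hs' with hss | hss
        · exact (hcS hs').2 x (hss hxs) y hys' hne
        · exact (hcS hs).2 x hxs y (hss hys') hne
    refine ⟨M, hMS, ?_⟩
    intro x hx hxM
    by_contra hno
    push_neg at hno
    have hMS' : insert x M ∈ S := by
      constructor
      · exact insert_subset hx hMS.1
      · intro a ha b hb hne
        rcases ha with rfl | ha <;> rcases hb with rfl | hb
        · exact absurd rfl hne
        · exact hno b hb
        · rw [dist_comm]; exact hno a ha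
        · exact hMS.2 a ha b hb hne
    exact hxM (hMmax hMS' (subset_insert x M) (mem_insert x M))
  choose M hM1 hM3 using hmax
  have hMc : ∀ n : ℕ, (M n).Countable := fun n =>
    countable_of_separated hf (by positivity) (hM1 n).1 (hM1 n).2
  refine ⟨⋃ n, M n, countable_iUnion hMc, ?_⟩
  intro x hx
  apply Metric.mem_closure_iff.2
  intro δ hδ
  obtain ⟨n, hn⟩ := exists_nat_one_div_lt hδ
  rw [one_div] at hn
  by_cases hxM : x ∈ M n
  · exact ⟨x, mem_iUnion.2 ⟨n, hxM⟩, by simpa [dist_self] using hδ⟩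
  · obtain ⟨y, hy, hlt⟩ := hM3 n x hx hxM
    exact ⟨y, mem_iUnion.2 ⟨n, hy⟩, hlt.trans hn⟩

lemma meas_comp {X : Type*} [MetricSpace X] [MeasurableSpace X] [BorelSpace X]
    (G : X → X → ℝ) (hG0 : ∀ x y, 0 ≤ G x y)
    (hGlsc : ∀ r : ℝ, 0 ≤ r → IsClosed {p : X × X | G p.1 p.2 ≤ r})
    {f h : unitInterval → X} (hf : Measurable f) (hh : Measurable h) :
    Measurable fun ω => G (f ω) (h ω) := by
  set Y : Set X := closure (Set.range f ∪ Set.range h) with hY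
  have hsep : IsSeparable Y := ((sep_range hf).union (sep_range hh)).closure
  haveI : SeparableSpace ↥Y := hsep.separableSpace
  haveI : SecondCountableTopology ↥Y := UniformSpace.secondCountable_of_separable _
  have hG' : Measurable (fun p : ↥Y × ↥Y => G p.1 p.2) := by
    apply measurable_of_Iic
    intro r
    rcases le_or_gt 0 r with h0 | h0
    · have hcl : IsClosed ((fun p : ↥Y × ↥Y => ((p.1 : X), (p.2 : X))) ⁻¹'
          {p : X × X | G p.1 p.2 ≤ r}) :=
        (hGlsc r h0).preimage (continuous_subtype_val.prodMap continuous_subtype_val)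
      exact hcl.measurableSet
    · have : (fun p : ↥Y × ↥Y => G p.1 p.2) ⁻¹' Iic r = ∅ := by
        ext p
        simp only [mem_preimage, mem_Iic, mem_empty_iff_false, iff_false, not_le]
        exact lt_of_lt_of_le h0 (hG0 _ _)
      rw [this]
      exact MeasurableSet.empty
  have hfY : Measurable (fun ω => (⟨f ω, subset_closure (Or.inl ⟨ω, rfl⟩)⟩ : ↥Y)) :=
    hf.subtype_mk
  have hhY : Measurable (fun ω => (⟨h ω, subset_closure (Or.inr ⟨ω, rfl⟩)⟩ : ↥Y)) :=
    hh.subtype_mk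
  exact hG'.comp (hfY.prodMk hhY)

/-- With `(X, dist, dᵤ)` a topometric space (`dist` complete, both distances
bounded by `1`, `dᵤ` lower semicontinuous w.r.t. `dist`), the induced distance
`d̂ᵤ(f,h) = ∫ dᵤ(f ω, h ω)` on `L⁰([0,1],X)` is lower semicontinuous for the topology of
`d̂(f,h) = ∫ dist(f ω, h ω)`: for every `r > 0`, the set `{(f,h) : d̂ᵤ(f,h) > r}` is open,
i.e. around each of its points there is a `d̂`-ball (in each coordinate) contained in it. -/
theorem stmt2 {X : Type*} [MetricSpace X] [CompleteSpace X]
    [MeasurableSpace X] [BorelSpace X]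
    (du : X → X → ℝ)
    (hdu_self : ∀ x, du x x = 0) (hdu_pos : ∀ x y, x ≠ y → 0 < du x y)
    (hdu_comm : ∀ x y, du x y = du y x)
    (hdu_tri : ∀ x y z, du x z ≤ du x y + du y z)
    (hdu_refines : ∀ x y : X, dist x y ≤ du x y)
    (hdu_lsc : ∀ r : ℝ, 0 ≤ r → IsClosed {p : X × X | du p.1 p.2 ≤ r})
    (hd_bdd : ∀ x y : X, dist x y ≤ 1) (hdu_bdd : ∀ x y, du x y ≤ 1)
    (r : ℝ) (hr : 0 < r)
    (f h : unitInterval → X) (hf : Measurable f) (hh : Measurable h)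
    (hfh : r < ∫ ω : unitInterval, du (f ω) (h ω)) :
    ∃ ε > 0, ∀ f' h' : unitInterval → X, Measurable f' → Measurable h' →
      (∫ ω : unitInterval, dist (f ω) (f' ω)) < ε →
      (∫ ω : unitInterval, dist (h ω) (h' ω)) < ε →
      r < ∫ ω : unitInterval, du (f' ω) (h' ω) := by
  classical
  by_contra hcon
  push_neg at hcon
  have hdu0 : ∀ x y, 0 ≤ du x y := fun x y => dist_nonneg.trans (hdu_refines x y)
  have hmeas_du : ∀ {f' h' : unitInterval → X}, Measurable f' → Measurable h' →
      Measurable fun ω => du (f' ω) (h' ω) :=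
    fun hf' hh' => meas_comp du hdu0 hdu_lsc hf' hh'
  have hdist_lsc : ∀ s : ℝ, 0 ≤ s → IsClosed {p : X × X | dist p.1 p.2 ≤ s} :=
    fun s _ => isClosed_le continuous_dist continuous_const
  have hmeas_dist : ∀ {f' h' : unitInterval → X}, Measurable f' → Measurable h' →
      Measurable fun ω => dist (f' ω) (h' ω) :=
    fun hf' hh' => meas_comp (fun x y => dist x y) (fun _ _ => dist_nonneg) hdist_lsc hf' hh'
  have hint : ∀ g : unitInterval → ℝ, Measurable g → (∀ ω, 0 ≤ g ω) → (∀ ω, g ω ≤ 1) →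
      Integrable g volume := by
    intro g hg h0 h1
    refine ⟨hg.aestronglyMeasurable, ?_⟩
    apply (hasFiniteIntegral_const (1:ℝ)).mono'
    exact Filter.Eventually.of_forall fun ω => by
      rw [Real.norm_eq_abs, abs_of_nonneg (h0 ω)]; exact h1 ω
  have hseq : ∀ n : ℕ, ∃ p : (unitInterval → X) × (unitInterval → X),
      Measurable p.1 ∧ Measurable p.2 ∧
      (∫ ω : unitInterval, dist (f ω) (p.1 ω)) < ((n:ℝ)+1)⁻¹ ∧
      (∫ ω : unitInterval, dist (h ω) (p.2 ω)) < ((n:ℝ)+1)⁻¹ ∧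
      (∫ ω : unitInterval, du (p.1 ω) (p.2 ω)) ≤ r := by
    intro n
    obtain ⟨f', h', h1, h2, h3, h4, h5⟩ := hcon (((n:ℝ)+1)⁻¹) (by positivity)
    exact ⟨(f', h'), h1, h2, h3, h4, h5⟩
  choose P hP1 hP2 hP3 hP4 hP5 using hseq
  set F : ℕ → unitInterval → X := fun n => (P n).1 with hF
  set G' : ℕ → unitInterval → X := fun n => (P n).2 with hG'
  have htim : ∀ (g : ℕ → unitInterval → X) (g₀ : unitInterval → X), Measurable g₀ →
      (∀ n, Measurable (g n)) →
      (∀ n, (∫ ω : unitInterval, dist (g₀ ω) (g n ω)) < ((n:ℝ)+1)⁻¹) →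
      TendstoInMeasure volume g atTop g₀ := by
    intro g g₀ hg₀ hg hbound
    rw [tendstoInMeasure_iff_dist]
    intro δ hδ
    have hb : ∀ n, volume {ω : unitInterval | δ ≤ dist (g n ω) (g₀ ω)}
        ≤ ENNReal.ofReal (((n:ℝ)+1)⁻¹) / ENNReal.ofReal δ := by
      intro n
      have hmeasn : Measurable fun ω => dist (g₀ ω) (g n ω) := hmeas_dist hg₀ (hg n)
      have hIn : Integrable (fun ω => dist (g₀ ω) (g n ω)) volume :=
        hint _ hmeasn (fun ω => dist_nonneg) (fun ω => hd_bdd _ _)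
      have heq : {ω : unitInterval | δ ≤ dist (g n ω) (g₀ ω)}
          = {ω : unitInterval | ENNReal.ofReal δ ≤ ENNReal.ofReal (dist (g₀ ω) (g n ω))} := by
        ext ω
        simp only [mem_setOf_eq]
        rw [ENNReal.ofReal_le_ofReal_iff dist_nonneg, dist_comm]
      rw [heq]
      calc volume {ω : unitInterval | ENNReal.ofReal δ ≤ ENNReal.ofReal (dist (g₀ ω) (g n ω))}
          ≤ (∫⁻ ω : unitInterval, ENNReal.ofReal (dist (g₀ ω) (g n ω))) / ENNReal.ofReal δ :=
            meas_ge_le_lintegral_div hmeasn.ennreal_ofReal.aemeasurable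
              (by simpa using hδ) ENNReal.ofReal_ne_top
        _ ≤ ENNReal.ofReal (((n:ℝ)+1)⁻¹) / ENNReal.ofReal δ := by
            apply ENNReal.div_le_div_right
            rw [← ofReal_integral_eq_lintegral_ofReal hIn
              (Filter.Eventually.of_forall fun ω => dist_nonneg)]
            exact ENNReal.ofReal_le_ofReal (hbound n).le
    have hlim : Tendsto (fun n : ℕ => ENNReal.ofReal (((n:ℝ)+1)⁻¹) / ENNReal.ofReal δ)
        atTop (𝓝 0) := by
      have h1 : Tendsto (fun n : ℕ => ENNReal.ofReal (((n:ℝ)+1)⁻¹)) atTop (𝓝 0) := by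
        rw [← ENNReal.ofReal_zero]
        apply ENNReal.tendsto_ofReal
        simpa [one_div] using tendsto_one_div_add_atTop_nhds_zero_nat (𝕜 := ℝ)
      have h2 := ENNReal.Tendsto.div_const (b := ENNReal.ofReal δ) h1 (Or.inr (by simpa using hδ))
      simpa using h2
    exact tendsto_of_tendsto_of_tendsto_of_le_of_le tendsto_const_nhds hlim
      (fun n => zero_le) hb
  have tim1 : TendstoInMeasure volume F atTop f :=
    htim F f hf (fun n => hP1 n) (fun n => hP3 n)
  obtain ⟨ns, hns, hae1⟩ := tim1.exists_seq_tendsto_ae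
  have tim2 : TendstoInMeasure volume (fun i => G' (ns i)) atTop h := by
    intro δ hδ
    exact (htim G' h hh (fun n => hP2 n) (fun n => hP4 n) δ hδ).comp hns.tendsto_atTop
  obtain ⟨ms, hms, hae2⟩ := tim2.exists_seq_tendsto_ae
  set φ : ℕ → ℕ := fun i => ns (ms i) with hφ
  have hae1' : ∀ᵐ ω : unitInterval, Tendsto (fun i => F (φ i) ω) atTop (𝓝 (f ω)) := by
    filter_upwards [hae1] with ω hω
    exact hω.comp hms.tendsto_atTop
  have hae2' : ∀ᵐ ω : unitInterval, Tendsto (fun i => G' (φ i) ω) atTop (𝓝 (h ω)) := hae2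
  have hptwise : ∀ᵐ ω : unitInterval,
      ENNReal.ofReal (du (f ω) (h ω)) ≤
        liminf (fun i => ENNReal.ofReal (du (F (φ i) ω) (G' (φ i) ω))) atTop := by
    filter_upwards [hae1', hae2'] with ω hω1 hω2
    by_contra hlt
    push_neg at hlt
    obtain ⟨c, hc1, hc2⟩ := exists_between hlt
    have hcne : c ≠ ⊤ := ne_top_of_lt hc2
    set y := c.toReal with hy
    have hylt : y < du (f ω) (h ω) := (ENNReal.lt_ofReal_iff_toReal_lt hcne).1 hc2
    have hev : ∀ᶠ i in atTop, y < du (F (φ i) ω) (G' (φ i) ω) := by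
      rcases lt_or_ge y 0 with hy0 | hy0
      · exact Filter.Eventually.of_forall fun i => lt_of_lt_of_le hy0 (hdu0 _ _)
      · by_contra hnev
        have hfreq : ∃ᶠ i in atTop,
            (F (φ i) ω, G' (φ i) ω) ∈ {p : X × X | du p.1 p.2 ≤ y} :=
          (Filter.not_eventually.1 hnev).mono fun i hi => not_lt.1 hi
        have hmem := (hdu_lsc y hy0).mem_of_frequently_of_tendsto hfreq
          (hω1.prodMk_nhds hω2)
        exact absurd hylt (not_lt.2 hmem)
    have hcle : c ≤ liminf (fun i => ENNReal.ofReal (du (F (φ i) ω) (G' (φ i) ω))) atTop := by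
      have hev2 : ∀ᶠ i in atTop, c ≤ ENNReal.ofReal (du (F (φ i) ω) (G' (φ i) ω)) := by
        filter_upwards [hev] with i hi
        rw [← ENNReal.ofReal_toReal hcne]
        exact ENNReal.ofReal_le_ofReal hi.le
      exact Filter.le_liminf_of_le (by isBoundedDefault) hev2
    exact absurd (lt_of_le_of_lt hcle hc1) (lt_irrefl _)
  have hmeasn : ∀ i, Measurable fun ω : unitInterval =>
      ENNReal.ofReal (du (F (φ i) ω) (G' (φ i) ω)) :=
    fun i => (hmeas_du (hP1 (φ i)) (hP2 (φ i))).ennreal_ofReal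
  have fatou := lintegral_liminf_le (μ := (volume : Measure unitInterval)) (u := atTop) hmeasn
  have hIfh : Integrable (fun ω : unitInterval => du (f ω) (h ω)) volume :=
    hint _ (hmeas_du hf hh) (fun ω => hdu0 _ _) (fun ω => hdu_bdd _ _)
  have hchain : ENNReal.ofReal (∫ ω : unitInterval, du (f ω) (h ω)) ≤ ENNReal.ofReal r := by
    calc ENNReal.ofReal (∫ ω : unitInterval, du (f ω) (h ω))
        = ∫⁻ ω : unitInterval, ENNReal.ofReal (du (f ω) (h ω)) :=
          ofReal_integral_eq_lintegral_ofReal hIfh (.of_forall fun ω => hdu0 _ _)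
      _ ≤ ∫⁻ ω : unitInterval,
            liminf (fun i => ENNReal.ofReal (du (F (φ i) ω) (G' (φ i) ω))) atTop :=
          lintegral_mono_ae hptwise
      _ ≤ liminf (fun i => ∫⁻ ω : unitInterval,
            ENNReal.ofReal (du (F (φ i) ω) (G' (φ i) ω))) atTop := fatou
      _ ≤ ENNReal.ofReal r := by
          have hle : ∀ i, (∫⁻ ω : unitInterval,
              ENNReal.ofReal (du (F (φ i) ω) (G' (φ i) ω))) ≤ ENNReal.ofReal r := by
            intro i
            have hIi : Integrable (fun ω : unitInterval => du (F (φ i) ω) (G' (φ i) ω)) volume :=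
              hint _ (hmeas_du (hP1 (φ i)) (hP2 (φ i))) (fun ω => hdu0 _ _)
                (fun ω => hdu_bdd _ _)
            rw [← ofReal_integral_eq_lintegral_ofReal hIi (.of_forall fun ω => hdu0 _ _)]
            exact ENNReal.ofReal_le_ofReal (hP5 (φ i))
          calc liminf (fun i => ∫⁻ ω : unitInterval,
                ENNReal.ofReal (du (F (φ i) ω) (G' (φ i) ω))) atTop
              ≤ liminf (fun _ : ℕ => ENNReal.ofReal r) atTop :=
                liminf_le_liminf (Filter.Eventually.of_forall hle)
            _ = ENNReal.ofReal r := liminf_const _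
  exact absurd hfh (not_lt.2 ((ENNReal.ofReal_le_ofReal_iff hr.le).1 hchain))
end

section
/- Let (f,T) ∈ L⁰([0,1],S∞) ⋊ Aut([0,1]). Then the uniform distance from (f,T) to the identity equals μ({ω : f(ω) ≠ e} ∪ {ω : T(ω) ≠ ω}), where the uniform distance is L_u((f,T),(C_e,Id)) = sup over α ∈ L⁰([0,1],ℕ) of μ({ω : f(ω)(α(T⁻¹(ω))) ≠ α(ω)}). -/
open MeasureTheory
open scoped ENNReal NNReal

/-- The group `Aut([0,1])` of invertible Lebesgue-measure-preserving transformations. -/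
def MAut : Type := {T : unitInterval ≃ᵐ unitInterval // MeasurePreserving T volume volume}

/-- The Borel measurable structure on `S∞ = Perm ℕ` (from the Polish topology of pointwise
convergence of the permutation and its inverse). -/
noncomputable instance : MeasurableSpace (Equiv.Perm ℕ) :=
  MeasurableSpace.comap (fun σ => ((σ : ℕ → ℕ), (σ.symm : ℕ → ℕ))) inferInstance

section Aux

lemma permPair_measurable :
    Measurable (fun σ : Equiv.Perm ℕ => ((σ : ℕ → ℕ), (σ.symm : ℕ → ℕ))) :=
  measurable_iff_comap_le.mpr le_rfl

lemma measurableSet_perm_apply (n k : ℕ) : MeasurableSet {σ : Equiv.Perm ℕ | σ n = k} := by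
  have h : {σ : Equiv.Perm ℕ | σ n = k}
      = (fun σ : Equiv.Perm ℕ => ((σ : ℕ → ℕ), (σ.symm : ℕ → ℕ))) ⁻¹'
        ((fun p : (ℕ → ℕ) × (ℕ → ℕ) => p.1 n) ⁻¹' {k}) := rfl
  rw [h]
  exact permPair_measurable
    (((measurable_pi_apply n).comp measurable_fst) (measurableSet_singleton k))

lemma measurableSet_perm_eq_one : MeasurableSet {σ : Equiv.Perm ℕ | σ = 1} := by
  have h : {σ : Equiv.Perm ℕ | σ = 1} = ⋂ n, {σ : Equiv.Perm ℕ | σ n = n} := by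
    ext σ
    simp [Set.mem_iInter, Equiv.ext_iff]
  rw [h]
  exact MeasurableSet.iInter fun n => measurableSet_perm_apply n n

open scoped Classical in
/-- least moved point of a permutation -/
noncomputable def lmp (σ : Equiv.Perm ℕ) : ℕ :=
  if h : ∃ n, σ n ≠ n then Nat.find h else 0

open scoped Classical in
lemma lmp_spec {σ : Equiv.Perm ℕ} (h : σ ≠ 1) : σ (lmp σ) ≠ lmp σ := by
  have h' : ∃ n, σ n ≠ n := by
    by_contra hc
    push_neg at hc
    exact h (Equiv.ext fun n => hc n)
  rw [lmp, dif_pos h']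
  exact Nat.find_spec h'

open scoped Classical in
lemma measurable_lmp : Measurable lmp := by
  apply measurable_to_countable'
  intro k
  rcases Nat.eq_zero_or_pos k with hk | hk
  · subst hk
    have h : lmp ⁻¹' {0} = {σ : Equiv.Perm ℕ | σ 0 ≠ 0} ∪ ⋂ n, {σ : Equiv.Perm ℕ | σ n = n} := by
      ext σ
      simp only [Set.mem_preimage, Set.mem_singleton_iff, Set.mem_union, Set.mem_setOf_eq,
        Set.mem_iInter]
      by_cases h : ∃ n, σ n ≠ n
      · rw [lmp, dif_pos h, Nat.find_eq_zero h]
        constructor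
        · exact fun h0 => Or.inl h0
        · rintro (h0 | hall)
          · exact h0
          · obtain ⟨n, hn⟩ := h; exact absurd (hall n) hn
      · rw [lmp, dif_neg h]
        push_neg at h
        simp [h]
    rw [h]
    exact ((measurableSet_perm_apply 0 0).compl).union
      (MeasurableSet.iInter fun n => measurableSet_perm_apply n n)
  · have h : lmp ⁻¹' {k} =
        {σ : Equiv.Perm ℕ | σ k ≠ k} ∩ ⋂ j, ⋂ _ : j < k, {σ : Equiv.Perm ℕ | σ j = j} := by
      ext σ
      simp only [Set.mem_preimage, Set.mem_singleton_iff, Set.mem_inter_iff, Set.mem_setOf_eq,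
        Set.mem_iInter]
      by_cases h : ∃ n, σ n ≠ n
      · rw [lmp, dif_pos h, Nat.find_eq_iff h]
        constructor
        · rintro ⟨h1, h2⟩
          exact ⟨h1, fun j hj => not_not.mp (h2 j hj)⟩
        · rintro ⟨h1, h2⟩
          exact ⟨h1, fun j hj => not_not.mpr (h2 j hj)⟩
      · rw [lmp, dif_neg h]
        push_neg at h
        constructor
        · intro h0; exact absurd h0.symm hk.ne'
        · rintro ⟨h1, -⟩; exact absurd (h k) h1
    rw [h]
    exact ((measurableSet_perm_apply k k).compl).inter
      (MeasurableSet.iInter fun j => MeasurableSet.iInter fun _ => measurableSet_perm_apply j j)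

lemma measurable_perm_apply_comp {Ω : Type*} [MeasurableSpace Ω] {f : Ω → Equiv.Perm ℕ}
    {g : Ω → ℕ} (hf : Measurable f) (hg : Measurable g) :
    Measurable fun ω => f ω (g ω) := by
  apply measurable_to_countable'
  intro k
  have h : (fun ω => f ω (g ω)) ⁻¹' {k} = ⋃ n, g ⁻¹' {n} ∩ f ⁻¹' {σ | σ n = k} := by
    ext ω
    simp only [Set.mem_preimage, Set.mem_singleton_iff, Set.mem_iUnion, Set.mem_inter_iff,
      Set.mem_setOf_eq]
    constructor
    · intro h; exact ⟨g ω, rfl, h⟩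
    · rintro ⟨n, rfl, h⟩; exact h
  rw [h]
  exact MeasurableSet.iUnion fun n =>
    (hg (measurableSet_singleton n)).inter (hf (measurableSet_perm_apply n k))

lemma card_filter_apply_le (K M : ℕ) (i j : Fin (K + 1)) (hij : i ≠ j) (g : ℕ → ℕ) :
    (Finset.univ.filter
      fun s : Fin (K + 1) → Fin (M + 1) => ((s j : ℕ) = g (s i))).card ≤ (M + 1) ^ K := by
  classical
  have hcard : Fintype.card ({x : Fin (K + 1) // x ≠ j} → Fin (M + 1)) = (M + 1) ^ K := by
    rw [Fintype.card_fun, Fintype.card_fin]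
    congr 1
    have : Fintype.card {x : Fin (K + 1) // x ≠ j} = Fintype.card (Fin (K + 1)) - 1 := by
      rw [Fintype.card_subtype_compl, Fintype.card_subtype_eq]
    rw [this, Fintype.card_fin]
    simp
  calc (Finset.univ.filter
      fun s : Fin (K + 1) → Fin (M + 1) => ((s j : ℕ) = g (s i))).card
      ≤ (Finset.univ : Finset ({x : Fin (K + 1) // x ≠ j} → Fin (M + 1))).card := by
        apply Finset.card_le_card_of_injOn
          (fun s (x : {x : Fin (K + 1) // x ≠ j}) => s x.1)
          (fun s _ => Finset.mem_univ _)
        intro s hs t ht hst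
        simp only [Finset.coe_filter, Set.mem_setOf_eq, Finset.mem_univ, true_and] at hs ht
        funext x
        by_cases hx : x = j
        · subst hx
          have hsi : s i = t i := congrFun hst ⟨i, hij⟩
          apply Fin.ext
          rw [hs, ht, hsi]
        · exact congrFun hst ⟨x, hx⟩
    _ = (M + 1) ^ K := by rw [Finset.card_univ, hcard]

lemma measurableSet_eq_nat {Ω : Type*} [MeasurableSpace Ω] {g h : Ω → ℕ}
    (hg : Measurable g) (hh : Measurable h) : MeasurableSet {ω | g ω = h ω} :=
  measurableSet_eq_fun hg hh

lemma bfloor_lt (m : ℕ) (ω : unitInterval) : ⌊(2 : ℝ) ^ m * (ω : ℝ)⌋₊ < 2 ^ m + 1 := by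
  have h1 : (2 : ℝ) ^ m * (ω : ℝ) ≤ (2 : ℝ) ^ m :=
    mul_le_of_le_one_right (by positivity) ω.2.2
  have h2 : ⌊(2 : ℝ) ^ m * (ω : ℝ)⌋₊ ≤ ⌊(2 : ℝ) ^ m⌋₊ := Nat.floor_mono h1
  have h3 : ⌊(2 : ℝ) ^ m⌋₊ = 2 ^ m := by
    rw [show ((2 : ℝ) ^ m) = ((2 ^ m : ℕ) : ℝ) by push_cast; ring, Nat.floor_natCast]
  omega

lemma bfloor_succ {x y : ℝ} (h : ⌊(2 : ℝ) ^ (m + 1) * x⌋₊ = ⌊(2 : ℝ) ^ (m + 1) * y⌋₊) :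
    ⌊(2 : ℝ) ^ m * x⌋₊ = ⌊(2 : ℝ) ^ m * y⌋₊ := by
  have e : ∀ z : ℝ, (2 : ℝ) ^ m * z = ((2 : ℝ) ^ (m + 1) * z) / (2 : ℕ) := by
    intro z; push_cast; rw [pow_succ]; ring
  rw [e x, e y, Nat.floor_div_natCast, Nat.floor_div_natCast, h]

lemma bfloor_sep {x y : ℝ} (hx : 0 ≤ x) (hy : 0 ≤ y)
    (h : ∀ m : ℕ, ⌊(2 : ℝ) ^ m * x⌋₊ = ⌊(2 : ℝ) ^ m * y⌋₊) : x = y := by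
  by_contra hne
  have hδ : 0 < |x - y| := abs_pos.mpr (sub_ne_zero.mpr hne)
  obtain ⟨m, hm⟩ := pow_unbounded_of_one_lt (|x - y|)⁻¹ (by norm_num : (1 : ℝ) < 2)
  have h2m : (0 : ℝ) < 2 ^ m := by positivity
  have hlt : 1 < 2 ^ m * |x - y| := by
    rw [← inv_mul_cancel₀ hδ.ne']
    exact mul_lt_mul_of_pos_right hm hδ
  have hb : ((⌊(2 : ℝ) ^ m * x⌋₊ : ℝ)) = (⌊(2 : ℝ) ^ m * y⌋₊ : ℝ) := by
    exact_mod_cast congrArg (Nat.cast : ℕ → ℝ) (h m)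
  have h1 : |2 ^ m * x - 2 ^ m * y| < 1 := by
    have hfx := Nat.floor_le (by positivity : (0:ℝ) ≤ 2 ^ m * x)
    have hfy := Nat.floor_le (by positivity : (0:ℝ) ≤ 2 ^ m * y)
    have hgx := Nat.lt_floor_add_one ((2:ℝ) ^ m * x)
    have hgy := Nat.lt_floor_add_one ((2:ℝ) ^ m * y)
    rw [abs_sub_lt_iff]
    constructor <;> nlinarith [hb]
  rw [← mul_sub, abs_mul, abs_of_pos h2m] at h1
  linarith

noncomputable def bfl (m : ℕ) (ω : unitInterval) : ℕ := ⌊(2 : ℝ) ^ m * (ω : ℝ)⌋₊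

lemma measurable_bfl (m : ℕ) : Measurable (bfl m) :=
  (measurable_const.mul measurable_subtype_coe).nat_floor

lemma measurableSet_fixed (T : unitInterval ≃ᵐ unitInterval) :
    MeasurableSet {ω : unitInterval | T ω = ω} := by
  have h : {ω : unitInterval | T ω = ω} = {ω : unitInterval | ((T ω : ℝ)) = (ω : ℝ)} := by
    ext ω; simp [Subtype.ext_iff]
  rw [h]
  exact measurableSet_eq_fun (measurable_subtype_coe.comp T.measurable) measurable_subtype_coe

noncomputable def alph (f : unitInterval → Equiv.Perm ℕ) (T : unitInterval ≃ᵐ unitInterval)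
    (m K M : ℕ) (s : Fin (K + 1) → Fin (M + 1)) (ω : unitInterval) : ℕ :=
  if T ω = ω then lmp (f ω)
  else (s ⟨bfl m ω % (K + 1), Nat.mod_lt _ (Nat.succ_pos K)⟩ : ℕ)

lemma measurable_alph {f : unitInterval → Equiv.Perm ℕ} (hf : Measurable f)
    (T : unitInterval ≃ᵐ unitInterval) (m K M : ℕ) (s : Fin (K + 1) → Fin (M + 1)) :
    Measurable (alph f T m K M s) := by
  apply Measurable.ite (measurableSet_fixed T) (measurable_lmp.comp hf)
  exact Measurable.comp (g := fun n : ℕ => (s ⟨n % (K + 1), Nat.mod_lt _ (Nat.succ_pos K)⟩ : ℕ))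
    (f := bfl m) measurable_from_top (measurable_bfl m)

end Aux

/-- For `(f,T) ∈ L⁰([0,1],S∞) ⋊ Aut([0,1])` acting on `L⁰([0,1],ℕ)` by
`((f,T)α)(ω) = f(ω)(α(T⁻¹ ω))`, the uniform distance to the identity
`L_u((f,T),(C_e,Id)) = sup_{α ∈ L⁰([0,1],ℕ)} μ{ω : f(ω)(α(T⁻¹ ω)) ≠ α(ω)}`
equals `μ({ω : f(ω) ≠ e} ∪ {ω : T(ω) ≠ ω})`. -/
theorem stmt8 (f : unitInterval → Equiv.Perm ℕ) (hf : Measurable f) (T : MAut) :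
    (⨆ α : {a : unitInterval → ℕ // Measurable a},
        volume {ω : unitInterval | f ω (α.1 (T.1.symm ω)) ≠ α.1 ω}) =
      volume ({ω : unitInterval | f ω ≠ 1} ∪ {ω : unitInterval | T.1 ω ≠ ω}) := by
  classical
  set A : Set unitInterval := {ω | f ω ≠ 1} with hA
  set B : Set unitInterval := {ω | T.1 ω ≠ ω} with hB
  have hTsymm : Measurable (T.1.symm : unitInterval → unitInterval) := T.1.symm.measurable
  have hAmeas : MeasurableSet A := by
    have h : A = f ⁻¹' {σ : Equiv.Perm ℕ | σ = 1}ᶜ := rfl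
    rw [h]; exact hf measurableSet_perm_eq_one.compl
  have hBmeas : MeasurableSet B := by
    have h : B = {ω : unitInterval | T.1 ω = ω}ᶜ := rfl
    rw [h]; exact (measurableSet_fixed T.1).compl
  refine le_antisymm (iSup_le fun α => measure_mono fun ω hω => ?_) ?_
  · by_contra hc
    simp only [Set.mem_union, hA, hB, Set.mem_setOf_eq, not_or, not_not] at hc
    have h2 : T.1.symm ω = ω := by
      conv_lhs => rw [← hc.2, MeasurableEquiv.symm_apply_apply]
    exact hω (by rw [h2, hc.1]; rfl)
  · refine ENNReal.le_of_forall_pos_le_add fun ε hε hlt => ?_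
    have hεne : ((ε : ℝ≥0∞) / 2) ≠ 0 := by
      simp only [ne_eq, ENNReal.div_eq_zero_iff, ENNReal.ofNat_ne_top, or_false]
      exact_mod_cast hε.ne'
    have hhalf : (0 : ℝ≥0∞) < (ε : ℝ≥0∞) / 2 := pos_iff_ne_zero.mpr hεne
    set C : ℕ → Set unitInterval := fun m => {ω | bfl m (T.1.symm ω) = bfl m ω} with hC
    have hCmeas : ∀ m, MeasurableSet (C m) :=
      fun m => measurableSet_eq_nat ((measurable_bfl m).comp hTsymm) (measurable_bfl m)
    set D : ℕ → Set unitInterval := fun m => B ∩ C m with hD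
    have hDmeas : ∀ m, MeasurableSet (D m) := fun m => hBmeas.inter (hCmeas m)
    have hDanti : Antitone D := by
      apply antitone_nat_of_succ_le
      intro m ω hω
      exact ⟨hω.1, bfloor_succ hω.2⟩
    have hDempty : ⋂ m, D m = ∅ := by
      ext ω
      simp only [Set.mem_iInter, Set.mem_empty_iff_false, iff_false, not_forall]
      by_contra hcon
      push_neg at hcon
      have hx : (T.1.symm ω : ℝ) = (ω : ℝ) :=
        bfloor_sep (T.1.symm ω).2.1 ω.2.1 (fun m => (hcon m).2)
      have h2 : T.1.symm ω = ω := Subtype.ext hx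
      have h3 : T.1 ω ≠ ω := (hcon 0).1
      apply h3
      conv_lhs => rw [← h2, MeasurableEquiv.apply_symm_apply]
    have htend : Filter.Tendsto (volume ∘ D) Filter.atTop (nhds 0) := by
      have h := tendsto_measure_iInter_atTop (μ := volume)
        (fun m => (hDmeas m).nullMeasurableSet) hDanti ⟨0, measure_ne_top _ _⟩
      rwa [hDempty, measure_empty] at h
    obtain ⟨m, hm⟩ := (htend.eventually_lt_const hhalf).exists
    simp only [Function.comp_apply] at hm
    obtain ⟨n, hn⟩ := ENNReal.exists_inv_nat_lt hεne
    have hn0 : n ≠ 0 := by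
      rintro rfl
      rw [Nat.cast_zero, ENNReal.inv_zero] at hn
      exact not_top_lt hn
    obtain ⟨M, rfl⟩ := Nat.exists_eq_succ_of_ne_zero hn0
    set K : ℕ := 2 ^ m with hK
    set B' : Set unitInterval := B \ C m with hB'
    have hB'meas : MeasurableSet B' := hBmeas.diff (hCmeas m)
    set a : (Fin (K + 1) → Fin (M + 1)) → unitInterval → ℕ :=
      fun s => alph f T.1 m K M s with ha
    have hameas : ∀ s, Measurable (a s) := fun s => measurable_alph hf T.1 m K M s
    set E : (Fin (K + 1) → Fin (M + 1)) → Set unitInterval :=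
      fun s => {ω | f ω (a s (T.1.symm ω)) = a s ω} with hE
    have hEmeas : ∀ s, MeasurableSet (E s) := fun s =>
      measurableSet_eq_nat (measurable_perm_apply_comp hf ((hameas s).comp hTsymm)) (hameas s)
    set Fail : (Fin (K + 1) → Fin (M + 1)) → Set unitInterval :=
      fun s => B' ∩ E s with hFail
    have hFailmeas : ∀ s, MeasurableSet (Fail s) := fun s => hB'meas.inter (hEmeas s)
    have hpoint : ∀ ω, (∑ s : Fin (K + 1) → Fin (M + 1),
        (Fail s).indicator (1 : unitInterval → ℝ≥0∞) ω)
        ≤ (((M + 1) ^ K : ℕ) : ℝ≥0∞) * B'.indicator (1 : unitInterval → ℝ≥0∞) ω := by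
      intro ω
      by_cases hω : ω ∈ B'
      · have hωB : ω ∈ B := hω.1
        have hωC : bfl m (T.1.symm ω) ≠ bfl m ω := hω.2
        have hTne : T.1 ω ≠ ω := hωB
        have hTsne : T.1 (T.1.symm ω) ≠ T.1.symm ω := by
          intro hfix
          have h1 : T.1 (T.1.symm ω) = ω := T.1.apply_symm_apply ω
          have h2 : T.1.symm ω = ω := hfix.symm.trans h1
          apply hTne
          conv_lhs => rw [← h2, MeasurableEquiv.apply_symm_apply]
        set i : Fin (K + 1) :=
          ⟨bfl m (T.1.symm ω) % (K + 1), Nat.mod_lt _ (Nat.succ_pos K)⟩ with hi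
        set j : Fin (K + 1) := ⟨bfl m ω % (K + 1), Nat.mod_lt _ (Nat.succ_pos K)⟩ with hj
        have hij : i ≠ j := by
          intro hij
          apply hωC
          have h := congrArg (Fin.val) hij
          rw [hi, hj] at h
          simpa [Nat.mod_eq_of_lt (show bfl m (T.1.symm ω) < K + 1 from bfloor_lt m _),
            Nat.mod_eq_of_lt (show bfl m ω < K + 1 from bfloor_lt m ω)] using h
        have hmem : ∀ s : Fin (K + 1) → Fin (M + 1),
            ω ∈ Fail s ↔ ((s j : ℕ) = f ω (s i)) := by
          intro s
          have h1 : a s (T.1.symm ω) = (s i : ℕ) := if_neg hTsne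
          have h2 : a s ω = (s j : ℕ) := if_neg hTne
          constructor
          · rintro ⟨-, heq⟩
            have heq' : f ω (a s (T.1.symm ω)) = a s ω := heq
            rw [h1, h2] at heq'
            exact heq'.symm
          · intro h
            exact ⟨hω, show f ω (a s (T.1.symm ω)) = a s ω by rw [h1, h2, ← h]⟩
        calc (∑ s : Fin (K + 1) → Fin (M + 1),
            (Fail s).indicator (1 : unitInterval → ℝ≥0∞) ω)
            = ∑ s : Fin (K + 1) → Fin (M + 1),
              (if (s j : ℕ) = f ω (s i) then (1 : ℝ≥0∞) else 0) := by
              refine Finset.sum_congr rfl fun s _ => ?_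
              rw [Set.indicator_apply]
              simp only [Pi.one_apply]
              exact if_congr (hmem s) rfl rfl
          _ = ((Finset.univ.filter
              (fun s : Fin (K + 1) → Fin (M + 1) => (s j : ℕ) = f ω (s i))).card : ℝ≥0∞) := by
              rw [Finset.sum_boole]
          _ ≤ (((M + 1) ^ K : ℕ) : ℝ≥0∞) := by
              exact_mod_cast Nat.cast_le.mpr (card_filter_apply_le K M i j hij (f ω))
          _ = (((M + 1) ^ K : ℕ) : ℝ≥0∞) * B'.indicator (1 : unitInterval → ℝ≥0∞) ω := by
              rw [Set.indicator_of_mem hω, Pi.one_apply, mul_one]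
      · have hz : ∀ s : Fin (K + 1) → Fin (M + 1),
            (Fail s).indicator (1 : unitInterval → ℝ≥0∞) ω = 0 := fun s =>
          Set.indicator_of_notMem (fun hmem => hω hmem.1) _
        rw [Finset.sum_eq_zero fun s _ => hz s]
        exact zero_le
    have hsum : (∑ s : Fin (K + 1) → Fin (M + 1), volume (Fail s))
        ≤ (((M + 1) ^ K : ℕ) : ℝ≥0∞) * volume B' := by
      calc (∑ s : Fin (K + 1) → Fin (M + 1), volume (Fail s))
          = ∑ s : Fin (K + 1) → Fin (M + 1),
            ∫⁻ ω, (Fail s).indicator (1 : unitInterval → ℝ≥0∞) ω ∂volume :=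
            Finset.sum_congr rfl fun s _ => (lintegral_indicator_one (hFailmeas s)).symm
        _ = ∫⁻ ω, (∑ s : Fin (K + 1) → Fin (M + 1),
              (Fail s).indicator (1 : unitInterval → ℝ≥0∞) ω) ∂volume :=
            (lintegral_finset_sum _ fun s _ => measurable_one.indicator (hFailmeas s)).symm
        _ ≤ ∫⁻ ω, ((((M + 1) ^ K : ℕ) : ℝ≥0∞)
              * B'.indicator (1 : unitInterval → ℝ≥0∞) ω) ∂volume := lintegral_mono hpoint
        _ = (((M + 1) ^ K : ℕ) : ℝ≥0∞) * volume B' := by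
            rw [lintegral_const_mul _ (measurable_one.indicator hB'meas),
              lintegral_indicator_one hB'meas]
    obtain ⟨s₀, -, hs₀⟩ := Finset.exists_min_image
      (Finset.univ : Finset (Fin (K + 1) → Fin (M + 1)))
      (fun s => volume (Fail s)) Finset.univ_nonempty
    have hle' : (((M + 1) ^ (K + 1) : ℕ) : ℝ≥0∞) * volume (Fail s₀)
        ≤ (((M + 1) ^ K : ℕ) : ℝ≥0∞) := by
      have hcard : ((M + 1) ^ (K + 1) : ℕ)
          = (Finset.univ : Finset (Fin (K + 1) → Fin (M + 1))).card := by
        rw [Finset.card_univ, Fintype.card_fun, Fintype.card_fin, Fintype.card_fin]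
      calc (((M + 1) ^ (K + 1) : ℕ) : ℝ≥0∞) * volume (Fail s₀)
          = (Finset.univ : Finset (Fin (K + 1) → Fin (M + 1))).card • volume (Fail s₀) := by
            rw [nsmul_eq_mul, hcard]
        _ ≤ ∑ s : Fin (K + 1) → Fin (M + 1), volume (Fail s) :=
            Finset.card_nsmul_le_sum _ _ _ fun x _ => hs₀ x (Finset.mem_univ x)
        _ ≤ (((M + 1) ^ K : ℕ) : ℝ≥0∞) * volume B' := hsum
        _ ≤ (((M + 1) ^ K : ℕ) : ℝ≥0∞) * 1 := by gcongr; exact prob_le_one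
        _ = (((M + 1) ^ K : ℕ) : ℝ≥0∞) := mul_one _
    have hx0 : (((M + 1) ^ K : ℕ) : ℝ≥0∞) ≠ 0 := by
      exact Nat.cast_ne_zero.mpr (by positivity)
    have hxt : (((M + 1) ^ K : ℕ) : ℝ≥0∞) ≠ ⊤ := ENNReal.natCast_ne_top _
    have hμFail : volume (Fail s₀) ≤ (((M + 1 : ℕ)) : ℝ≥0∞)⁻¹ := by
      rw [ENNReal.le_inv_iff_mul_le]
      rw [mul_comm]
      refine (ENNReal.mul_le_mul_iff_right hx0 hxt).mp ?_
      calc (((M + 1) ^ K : ℕ) : ℝ≥0∞) * (((M + 1 : ℕ) : ℝ≥0∞) * volume (Fail s₀))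
          = (((M + 1) ^ (K + 1) : ℕ) : ℝ≥0∞) * volume (Fail s₀) := by
            rw [← mul_assoc, pow_succ, Nat.cast_mul]
        _ ≤ (((M + 1) ^ K : ℕ) : ℝ≥0∞) := hle'
        _ = (((M + 1) ^ K : ℕ) : ℝ≥0∞) * 1 := (mul_one _).symm
    have hFailhalf : volume (Fail s₀) < (ε : ℝ≥0∞) / 2 := by
      refine lt_of_le_of_lt hμFail ?_
      exact_mod_cast hn
    have hbadsub : (A \ B) ∪ (B' \ E s₀)
        ⊆ {ω : unitInterval | f ω (a s₀ (T.1.symm ω)) ≠ a s₀ ω} := by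
      rintro ω (⟨hωA, hωB⟩ | ⟨hωB', hωE⟩)
      · have hTfix : T.1 ω = ω := not_not.mp hωB
        have hsymmfix : T.1.symm ω = ω := by
          conv_lhs => rw [← hTfix, MeasurableEquiv.symm_apply_apply]
        show f ω (a s₀ (T.1.symm ω)) ≠ a s₀ ω
        rw [hsymmfix]
        have hval : a s₀ ω = lmp (f ω) := if_pos hTfix
        rw [hval]
        exact lmp_spec hωA
      · exact hωE
    have hkey : volume (A \ B) + volume (B' \ E s₀)
        ≤ ⨆ α : {a₀ : unitInterval → ℕ // Measurable a₀},
            volume {ω : unitInterval | f ω (α.1 (T.1.symm ω)) ≠ α.1 ω} := by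
      rw [← measure_union
        (Set.disjoint_sdiff_left.mono_right (Set.diff_subset.trans Set.diff_subset))
        ((hB'meas.diff (hEmeas s₀)))]
      refine le_trans (measure_mono hbadsub) ?_
      exact le_iSup (fun α : {a₀ : unitInterval → ℕ // Measurable a₀} =>
        volume {ω : unitInterval | f ω (α.1 (T.1.symm ω)) ≠ α.1 ω}) ⟨a s₀, hameas s₀⟩
    have hAB : volume (A ∪ B) = volume (A \ B) + volume B := by
      rw [← Set.diff_union_self]
      exact measure_union Set.disjoint_sdiff_left hBmeas
    have hBsplit : volume B = volume (D m) + volume B' := by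
      exact (measure_inter_add_diff (μ := volume) B (hCmeas m)).symm
    have hB'split : volume B' ≤ volume (B' \ E s₀) + volume (Fail s₀) := by
      refine le_trans (measure_mono ?_) (measure_union_le _ _)
      intro ω hω
      by_cases hEω : ω ∈ E s₀
      · exact Or.inr ⟨hω, hEω⟩
      · exact Or.inl ⟨hω, hEω⟩
    calc volume (A ∪ B) = volume (A \ B) + (volume (D m) + volume B') := by
          rw [hAB, hBsplit]
      _ ≤ volume (A \ B) + (volume (D m)
            + (volume (B' \ E s₀) + volume (Fail s₀))) := by gcongr
      _ = (volume (A \ B) + volume (B' \ E s₀))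
            + (volume (Fail s₀) + volume (D m)) := by ring
      _ ≤ (⨆ α : {a₀ : unitInterval → ℕ // Measurable a₀},
            volume {ω : unitInterval | f ω (α.1 (T.1.symm ω)) ≠ α.1 ω})
            + ((ε : ℝ≥0∞) / 2 + (ε : ℝ≥0∞) / 2) :=
          add_le_add hkey (add_le_add hFailhalf.le hm.le)
      _ = _ + (ε : ℝ≥0∞) := by rw [ENNReal.add_halves]
end

section
/- Let (X,d) be a Polish metric space with diameter ≤ 1 containing two points at distance r > 0, G = Isom(X,d), and G̃ = L⁰([0,1],G) ⋊ Aut([0,1]). For (f,T) ∈ G̃, set A = {ω : f(ω) ≠ e ∧ T(ω) = ω} and B = {ω : T(ω) ≠ ω}. Then (r/8)·μ(B) + ∫_A d_u(f(ω),e) dμ ≤ L_u((f,T),(C_e,Id)) ≤ μ(B) + ∫_A d_u(f(ω),e) dμ. -/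
open MeasureTheory Topology Filter Set

/-- The Borel measurable structure on the isometry group of `X`. -/
noncomputable instance isomMeasurableSpace (X : Type*) [MetricSpace X] [MeasurableSpace X] :
    MeasurableSpace (X ≃ᵢ X) :=
  MeasurableSpace.comap (fun g => ((g : X → X), (g.symm : X → X))) inferInstance

section Aux
variable {X : Type*} [MetricSpace X] [MeasurableSpace X] [BorelSpace X]

omit [BorelSpace X] in
lemma stmt10_measurable_apply_const (x : X) : Measurable fun g : X ≃ᵢ X => g x := by
  have h : Measurable (fun g : X ≃ᵢ X => ((g : X → X), (g.symm : X → X))) :=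
    measurable_iff_comap_le.mpr le_rfl
  exact (measurable_pi_apply x).comp (measurable_fst.comp h)

lemma stmt10_measurable_eval [SecondCountableTopology X] [Nonempty X] :
    Measurable fun p : (X ≃ᵢ X) × X => p.1 p.2 := by
  obtain ⟨D, hD⟩ := TopologicalSpace.exists_dense_seq X
  have hex : ∀ (n : ℕ) (x : X), ∃ k, dist x (D k) < 1 / (n + 1) := by
    intro n x
    obtain ⟨k, hk⟩ := hD.exists_dist_lt x (by positivity : (0:ℝ) < 1 / (n + 1))
    exact ⟨k, hk⟩
  have hGm : ∀ n : ℕ, Measurable fun p : (X ≃ᵢ X) × X => p.1 (D (Nat.find (hex n p.2))) := by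
    intro n
    have h1 : Measurable fun q : (X ≃ᵢ X) × ℕ => q.1 (D q.2) :=
      measurable_from_prod_countable_left fun k => stmt10_measurable_apply_const (D k)
    have h2 : Measurable fun x : X => Nat.find (hex n x) :=
      measurable_find _ (fun k => measurableSet_lt (measurable_dist.comp
        (measurable_id.prodMk measurable_const)) measurable_const)
    exact h1.comp (measurable_fst.prodMk (h2.comp measurable_snd))
  refine measurable_of_tendsto_metrizable hGm ?_
  rw [tendsto_pi_nhds]
  intro p
  rw [tendsto_iff_dist_tendsto_zero]
  refine squeeze_zero (g := fun n : ℕ => 1 / (n + 1)) (fun n => dist_nonneg) ?_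
    tendsto_one_div_add_atTop_nhds_zero_nat
  intro n
  have := Nat.find_spec (hex n p.2)
  calc dist (p.1 (D (Nat.find (hex n p.2)))) (p.1 p.2)
      = dist (D (Nat.find (hex n p.2))) p.2 := p.1.isometry.dist_eq _ _
    _ ≤ 1 / (n + 1) := by rw [dist_comm]; exact le_of_lt this

end Aux

/-- Let `(X,d)` be Polish of diameter `≤ 1` containing two points at distance
`r > 0`, `G = Isom(X,d)`, `G̃ = L⁰([0,1],G) ⋊ Aut([0,1])`. For `(f,T) ∈ G̃`, with
`A = {ω : f(ω) ≠ e ∧ T(ω) = ω}`, `B = {ω : T(ω) ≠ ω}`,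
`dᵤ(g,e) = sup_x d(g x, x)` and `L_u((f,T),(C_e,Id)) = sup_α ∫ d(f(ω)(α(T⁻¹ω)), α(ω)) dω`,
one has `(r/8)·μ(B) + ∫_A dᵤ(f(ω),e) ≤ L_u((f,T),(C_e,Id)) ≤ μ(B) + ∫_A dᵤ(f(ω),e)`. -/
theorem stmt10 {X : Type*} [MetricSpace X] [PolishSpace X]
    [MeasurableSpace X] [BorelSpace X]
    (hd_bdd : ∀ x y : X, dist x y ≤ 1)
    (r : ℝ) (hr : 0 < r) (x₀ y₀ : X) (hxy : dist x₀ y₀ = r)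
    (f : unitInterval → (X ≃ᵢ X)) (hf : Measurable f) (T : MAut) :
    (r / 8) * (volume {ω : unitInterval | T.1 ω ≠ ω}).toReal +
        (∫ ω in {ω : unitInterval | f ω ≠ IsometryEquiv.refl X ∧ T.1 ω = ω},
          ⨆ x : X, dist (f ω x) x) ≤
      (⨆ α : {a : unitInterval → X // Measurable a},
        ∫ ω : unitInterval, dist (f ω (α.1 (T.1.symm ω))) (α.1 ω)) ∧
    (⨆ α : {a : unitInterval → X // Measurable a},
        ∫ ω : unitInterval, dist (f ω (α.1 (T.1.symm ω))) (α.1 ω)) ≤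
      (volume {ω : unitInterval | T.1 ω ≠ ω}).toReal +
        (∫ ω in {ω : unitInterval | f ω ≠ IsometryEquiv.refl X ∧ T.1 ω = ω},
          ⨆ x : X, dist (f ω x) x) := by
  classical
  have hXne : Nonempty X := ⟨x₀⟩
  obtain ⟨D, hD⟩ := TopologicalSpace.exists_dense_seq X
  set B : Set unitInterval := {ω : unitInterval | T.1 ω ≠ ω} with hBdef
  set A : Set unitInterval := {ω : unitInterval | f ω ≠ IsometryEquiv.refl X ∧ T.1 ω = ω}
    with hAdef
  set du : unitInterval → ℝ := fun ω => ⨆ x : X, dist (f ω x) x with hdudef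
  -- basic measurability
  have hTm : Measurable (T.1 : unitInterval → unitInterval) := T.1.measurable
  have hTsm : Measurable (T.1.symm : unitInterval → unitInterval) := T.1.symm.measurable
  have hBm : MeasurableSet B := by
    have : MeasurableSet {ω : unitInterval | T.1 ω = ω} :=
      hTm.stronglyMeasurable.measurableSet_eq_fun measurable_id.stronglyMeasurable
    exact this.compl
  have hfix : ∀ ω : unitInterval, T.1 ω = ω → T.1.symm ω = ω := by
    intro ω h
    conv_lhs => rw [← h]
    exact T.1.symm_apply_apply ω
  have hdistm : ∀ x : X, Measurable fun ω => dist (f ω x) x :=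
    fun x => ((stmt10_measurable_apply_const x).comp hf).dist measurable_const
  -- du facts
  have hbdd1 : ∀ ω, BddAbove (range fun x : X => dist (f ω x) x) :=
    fun ω => ⟨1, by rintro _ ⟨x, rfl⟩; exact hd_bdd _ _⟩
  have hbdd2 : ∀ ω, BddAbove (range fun k : ℕ => dist (f ω (D k)) (D k)) :=
    fun ω => ⟨1, by rintro _ ⟨k, rfl⟩; exact hd_bdd _ _⟩
  have hdu_nonneg : ∀ ω, 0 ≤ du ω := fun ω => Real.iSup_nonneg fun x => dist_nonneg
  have hdu_le_one : ∀ ω, du ω ≤ 1 := fun ω => Real.iSup_le (fun x => hd_bdd _ _) zero_le_one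
  have hduD : ∀ ω, du ω = ⨆ k, dist (f ω (D k)) (D k) := by
    intro ω
    apply le_antisymm
    · refine Real.iSup_le (fun x => ?_) (Real.iSup_nonneg fun k => dist_nonneg)
      refine le_of_forall_pos_le_add fun δ hδ => ?_
      obtain ⟨k, hk⟩ := hD.exists_dist_lt x (half_pos hδ)
      have h1 : dist (f ω x) (f ω (D k)) = dist x (D k) := (f ω).dist_eq _ _
      have h2 : dist (f ω (D k)) (D k) ≤ ⨆ k, dist (f ω (D k)) (D k) := le_ciSup (hbdd2 ω) k
      have h3 : dist (f ω x) x ≤ dist (f ω x) (f ω (D k)) + dist (f ω (D k)) (D k)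
          + dist (D k) x := dist_triangle4 _ _ _ _
      have h4 : dist (D k) x = dist x (D k) := dist_comm _ _
      linarith
    · exact ciSup_le fun k => le_ciSup (hbdd1 ω) (D k)
  have hdum : Measurable du := by
    rw [show du = fun ω => ⨆ k, dist (f ω (D k)) (D k) from funext hduD]
    exact Measurable.iSup fun k => hdistm (D k)
  have hdu0 : ∀ ω, f ω = IsometryEquiv.refl X ↔ du ω = 0 := by
    intro ω
    constructor
    · intro h
      have heq : du ω = ⨆ _ : X, (0:ℝ) := by
        rw [hdudef]; simp only [h]; congr 1; funext x; exact dist_self x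
      rw [heq]; exact ciSup_const
    · intro h
      apply IsometryEquiv.ext fun x => ?_
      have h1 : dist (f ω x) x ≤ 0 := h ▸ le_ciSup (hbdd1 ω) x
      have h2 : dist (f ω x) x = 0 := le_antisymm h1 dist_nonneg
      show f ω x = x
      exact dist_le_zero.mp h1
  have hAm : MeasurableSet A := by
    have h1 : A = {ω | ¬ du ω = 0} ∩ {ω | T.1 ω = ω} := by
      ext ω
      simp only [hAdef, Set.mem_setOf_eq, Set.mem_inter_iff, (hdu0 ω).not.symm]
    rw [h1]
    exact ((hdum.stronglyMeasurable.measurableSet_eq_fun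
      stronglyMeasurable_const).compl).inter
      (hTm.stronglyMeasurable.measurableSet_eq_fun measurable_id.stronglyMeasurable)
  have hA_sub_Bc : A ⊆ Bᶜ := fun ω hω => not_not_intro hω.2
  -- integrand measurability/integrability
  have hJm : ∀ α : unitInterval → X, Measurable α →
      Measurable fun ω => dist (f ω (α (T.1.symm ω))) (α ω) := by
    intro α hα
    have h1 : Measurable fun ω => f ω (α (T.1.symm ω)) :=
      stmt10_measurable_eval.comp (hf.prodMk (hα.comp hTsm))
    exact h1.dist hα
  have hJint : ∀ α : unitInterval → X, Measurable α →
      Integrable (fun ω => dist (f ω (α (T.1.symm ω))) (α ω)) volume := by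
    intro α hα
    refine (integrable_const (1:ℝ)).mono' ((hJm α hα).aestronglyMeasurable) ?_
    exact ae_of_all _ fun ω => by
      rw [Real.norm_eq_abs, abs_of_nonneg dist_nonneg]; exact hd_bdd _ _
  have hdui : Integrable du volume := by
    refine (integrable_const (1:ℝ)).mono' hdum.aestronglyMeasurable ?_
    exact ae_of_all _ fun ω => by
      rw [Real.norm_eq_abs, abs_of_nonneg (hdu_nonneg ω)]; exact hdu_le_one ω
  -- the upper bound
  have hup : ∀ α : {a : unitInterval → X // Measurable a},
      (∫ ω : unitInterval, dist (f ω (α.1 (T.1.symm ω))) (α.1 ω)) ≤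
        (volume B).toReal + ∫ ω in A, du ω := by
    rintro ⟨α, hα⟩
    have hJm' := hJm α hα
    have hJi := hJint α hα
    rw [← integral_add_compl hBm hJi]
    have h1 : ∫ ω in B, dist (f ω (α (T.1.symm ω))) (α ω) ≤ (volume B).toReal := by
      calc ∫ ω in B, dist (f ω (α (T.1.symm ω))) (α ω)
          ≤ ∫ _ω in B, (1:ℝ) := by
            refine setIntegral_mono_on hJi.integrableOn ?_ hBm fun ω _ => hd_bdd _ _
            exact integrableOn_const (measure_ne_top _ _)
        _ = (volume B).toReal := by simp [Measure.real]
    have h2 : ∫ ω in Bᶜ, dist (f ω (α (T.1.symm ω))) (α ω) ≤ ∫ ω in A, du ω := by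
      have hBc_eq : Bᶜ = A ∪ (Bᶜ \ A) := (Set.union_diff_cancel hA_sub_Bc).symm
      have hmdiff : MeasurableSet (Bᶜ \ A) := hBm.compl.diff hAm
      rw [hBc_eq, setIntegral_union disjoint_sdiff_right hmdiff hJi.integrableOn
        hJi.integrableOn]
      have hz : ∫ ω in Bᶜ \ A, dist (f ω (α (T.1.symm ω))) (α ω) = 0 := by
        rw [setIntegral_congr_fun hmdiff (g := fun _ => (0:ℝ)) ?_, integral_zero]
        intro ω hω
        have hTω : T.1 ω = ω := not_not.mp hω.1
        have hfω : f ω = IsometryEquiv.refl X := by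
          by_contra hne; exact hω.2 ⟨hne, hTω⟩
        simp only [hfix ω hTω, hfω]
        exact dist_self _
      have hle : ∫ ω in A, dist (f ω (α (T.1.symm ω))) (α ω) ≤ ∫ ω in A, du ω := by
        refine setIntegral_mono_on hJi.integrableOn hdui.integrableOn hAm fun ω hω => ?_
        rw [hfix ω hω.2]
        exact le_ciSup (hbdd1 ω) (α ω)
      linarith
    linarith
  have hbddS : BddAbove (range fun α : {a : unitInterval → X // Measurable a} =>
      ∫ ω : unitInterval, dist (f ω (α.1 (T.1.symm ω))) (α.1 ω)) :=
    ⟨(volume B).toReal + ∫ ω in A, du ω, by rintro _ ⟨α, rfl⟩; exact hup α⟩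
  have hInonneg : 0 ≤ (volume B).toReal + ∫ ω in A, du ω :=
    add_nonneg ENNReal.toReal_nonneg (setIntegral_nonneg hAm fun ω _ => hdu_nonneg ω)
  constructor
  · -- lower bound
    refine le_of_forall_pos_le_add fun ε hε => ?_
    -- B is invariant under T.symm
    have hBsymm : ∀ ω, ω ∈ B → T.1.symm ω ∈ B := by
      intro ω hω
      show T.1 (T.1.symm ω) ≠ T.1.symm ω
      rw [T.1.apply_symm_apply]
      intro hc
      apply hω
      nth_rewrite 1 [hc]
      rw [T.1.apply_symm_apply]
    -- near-optimal selection on fixed points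
    have hβex : ∀ ω, ∃ k, du ω - ε/2 < dist (f ω (D k)) (D k) := by
      intro ω
      have h : du ω - ε/2 < ⨆ k, dist (f ω (D k)) (D k) := by
        rw [← hduD ω]; linarith [hdu_nonneg ω]
      exact exists_lt_of_lt_ciSup h
    set β : unitInterval → X := fun ω => D (Nat.find (hβex ω)) with hβdef
    have hβm : Measurable β :=
      Measurable.find (f := fun k (_ : unitInterval) => D k)
        (fun k => measurable_const)
        (fun k => measurableSet_lt (hdum.sub measurable_const) (hdistm (D k))) hβex
    have hβspec : ∀ ω, du ω - ε/2 < dist (f ω (β ω)) (β ω) := fun ω => Nat.find_spec (hβex ω)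
    -- a countable family of measurable sets covering B, each moved off itself by T
    obtain ⟨E, hE⟩ := TopologicalSpace.exists_dense_seq unitInterval
    set Q : ℕ × ℕ → Set unitInterval := fun km =>
      {ω | dist ω (E km.1) < 1/(2*(km.2+1)) ∧ 1/(km.2+1) < dist ω (T.1 ω)} with hQdef
    have hQm : ∀ km, MeasurableSet (Q km) := fun km =>
      (measurableSet_lt (measurable_id.dist measurable_const) measurable_const).inter
        (measurableSet_lt measurable_const (measurable_id.dist hTm))
    have hQT : ∀ km ω, ω ∈ Q km → T.1 ω ∉ Q km := by
      rintro ⟨k, m⟩ ω ⟨h1, h2⟩ ⟨h3, _⟩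
      simp only at h1 h2 h3
      have h4 : dist ω (T.1 ω) ≤ dist ω (E k) + dist (T.1 ω) (E k) := by
        rw [dist_comm (T.1 ω)]; exact dist_triangle _ _ _
      have h5 : 1/((m:ℝ)+1) = 1/(2*((m:ℝ)+1)) + 1/(2*((m:ℝ)+1)) := by
        have hm0 : (0:ℝ) < (m:ℝ) + 1 := by positivity
        field_simp
        ring
      linarith
    have hQcov : ∀ ω, ω ∈ B → ∃ km, ω ∈ Q km := by
      intro ω hω
      have hd0 : 0 < dist ω (T.1 ω) := dist_pos.mpr (Ne.symm hω)
      obtain ⟨m, hm⟩ := exists_nat_one_div_lt hd0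
      obtain ⟨k, hk⟩ := hE.exists_dist_lt ω (by positivity : (0:ℝ) < 1/(2*((m:ℝ)+1)))
      exact ⟨(k, m), hk, hm⟩
    have hPex : ∀ ω, ∃ n, ω ∈ Q (Nat.pairEquiv.symm n) ∨ T.1 ω = ω := by
      intro ω
      by_cases hω : T.1 ω = ω
      · exact ⟨0, Or.inr hω⟩
      · obtain ⟨km, hkm⟩ := hQcov ω hω
        exact ⟨Nat.pairEquiv km, Or.inl (by rwa [Equiv.symm_apply_apply])⟩
    set idx : unitInterval → ℕ := fun ω => Nat.find (hPex ω) with hidxdef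
    have hidxm : Measurable idx := by
      refine measurable_find hPex fun n => ?_
      exact (hQm _).union
        (hTm.stronglyMeasurable.measurableSet_eq_fun measurable_id.stronglyMeasurable)
    have hidxP : ∀ ω, ω ∈ B → ω ∈ Q (Nat.pairEquiv.symm (idx ω)) :=
      fun ω hω => (Nat.find_spec (hPex ω)).resolve_right hω
    have hidx_ne : ∀ ω, ω ∈ B → idx (T.1.symm ω) ≠ idx ω := by
      intro ω hω h
      have h1 := hidxP _ (hBsymm ω hω)
      have h2 := hidxP ω hω
      rw [h] at h1
      have h3 := hQT _ _ h1
      rw [T.1.apply_symm_apply] at h3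
      exact h3 h2
    -- the truncation sets
    set SN : ℕ → Set unitInterval :=
      fun N => B ∩ {ω | idx ω ≤ N ∧ idx (T.1.symm ω) ≤ N} with hSNdef
    have hSNm : ∀ N, MeasurableSet (SN N) := fun N =>
      hBm.inter ((hidxm measurableSet_Iic).inter ((hidxm.comp hTsm) measurableSet_Iic))
    have hSN_sub : ∀ N, SN N ⊆ B := fun N => Set.inter_subset_left
    have hSNmono : Monotone SN := by
      rintro a b hab ω ⟨h1, h2, h3⟩
      exact ⟨h1, h2.trans hab, h3.trans hab⟩
    have hSNU : ⋃ N, SN N = B := by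
      apply Set.Subset.antisymm (Set.iUnion_subset hSN_sub)
      intro ω hω
      exact Set.mem_iUnion.mpr
        ⟨max (idx ω) (idx (T.1.symm ω)), hω, le_max_left _ _, le_max_right _ _⟩
    obtain ⟨N, hN⟩ : ∃ N, (volume B).toReal / 2 ≤ (volume (SN N)).toReal := by
      have htd : Tendsto (fun N => (volume (SN N)).toReal) atTop (𝓝 (volume B).toReal) := by
        have h1 : Tendsto (fun N => volume (SN N)) atTop (𝓝 (volume (⋃ N, SN N))) :=
          tendsto_measure_iUnion_atTop hSNmono
        rw [hSNU] at h1
        exact (ENNReal.tendsto_toReal (measure_ne_top _ _)).comp h1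
      rcases eq_or_lt_of_le (ENNReal.toReal_nonneg : (0:ℝ) ≤ (volume B).toReal) with h | h
      · exact ⟨0, by rw [← h]; simpa using ENNReal.toReal_nonneg⟩
      · obtain ⟨N, hN⟩ := (htd.eventually (eventually_gt_nhds
          (by linarith : (volume B).toReal / 2 < (volume B).toReal))).exists
        exact ⟨N, hN.le⟩
    -- labelled candidate functions
    set v : Bool → X := fun b => bif b then x₀ else y₀ with hvdef
    have hNlt : ∀ n : ℕ, min n N < N + 1 := fun n => Nat.lt_succ_of_le (min_le_right n N)
    set lab : (Fin (N+1) → Bool) → unitInterval → X := fun c =>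
      B.piecewise (fun ω => v (c ⟨min (idx ω) N, hNlt _⟩)) β with hlabdef
    have hlabm : ∀ c, Measurable (lab c) := by
      intro c
      refine Measurable.piecewise hBm ?_ hβm
      exact (measurable_from_top (f := fun n : ℕ => v (c ⟨min n N, hNlt n⟩))).comp hidxm
    set J : (Fin (N+1) → Bool) → unitInterval → ℝ := fun c ω =>
      dist (f ω ((lab c) (T.1.symm ω))) ((lab c) ω) with hJdef
    have hJcm : ∀ c, Measurable (J c) := fun c => hJm _ (hlabm c)
    have hJci : ∀ c, Integrable (J c) volume := fun c => hJint _ (hlabm c)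
    -- pointwise lower bound for the sum over all labellings
    have hkey : ∀ ω ∈ SN N, (2^N : ℝ) * r ≤ ∑ c : Fin (N+1) → Bool, J c ω := by
      rintro ω ⟨hωB, hiω, hiT⟩
      have hTB : T.1.symm ω ∈ B := hBsymm ω hωB
      set qf : Fin (N+1) := ⟨min (idx ω) N, hNlt _⟩ with hqf
      set pf : Fin (N+1) := ⟨min (idx (T.1.symm ω)) N, hNlt _⟩ with hpf
      have hne : pf ≠ qf := by
        intro h
        apply hidx_ne ω hωB
        have h2 := congrArg Fin.val h
        rw [hpf, hqf] at h2
        simpa [min_eq_left hiω, min_eq_left hiT] using h2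
      have hstep : ∀ c : Fin (N+1) → Bool, J c ω = dist (f ω (v (c pf))) (v (c qf)) := by
        intro c
        show dist (f ω ((lab c) (T.1.symm ω))) ((lab c) ω) = _
        rw [show (lab c) ω = v (c qf) from Set.piecewise_eq_of_mem _ _ _ hωB,
          show (lab c) (T.1.symm ω) = v (c pf) from Set.piecewise_eq_of_mem _ _ _ hTB]
      simp only [hstep]
      rw [← Equiv.sum_comp (Equiv.funSplitAt qf Bool).symm
        (fun c => dist (f ω (v (c pf))) (v (c qf))), Fintype.sum_prod_type]
      have hq : ∀ (b : Bool) (rest : {j : Fin (N+1) // j ≠ qf} → Bool),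
          (Equiv.funSplitAt qf Bool).symm (b, rest) qf = b := by
        intro b rest; simp [Equiv.funSplitAt, Equiv.piSplitAt]
      have hp : ∀ (b : Bool) (rest : {j : Fin (N+1) // j ≠ qf} → Bool),
          (Equiv.funSplitAt qf Bool).symm (b, rest) pf = rest ⟨pf, hne⟩ := by
        intro b rest; simp [Equiv.funSplitAt, Equiv.piSplitAt, hne]
      simp only [hq, hp]
      rw [Fintype.sum_bool]
      have hcard : Fintype.card ({j : Fin (N+1) // j ≠ qf} → Bool) = 2^N := by
        rw [Fintype.card_fun, Fintype.card_bool]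
        congr 1
        have h2 : Fintype.card {j : Fin (N+1) // j ≠ qf}
            = Fintype.card (Fin (N+1)) - Fintype.card {j : Fin (N+1) // j = qf} :=
          Fintype.card_subtype_compl _
        rw [h2, Fintype.card_subtype_eq, Fintype.card_fin]
        omega
      calc (2^N : ℝ) * r = ∑ _rest : {j : Fin (N+1) // j ≠ qf} → Bool, r := by
            rw [Finset.sum_const, Finset.card_univ, hcard, nsmul_eq_mul]; push_cast; ring
        _ ≤ ∑ rest : {j : Fin (N+1) // j ≠ qf} → Bool,
              (dist (f ω (v (rest ⟨pf, hne⟩))) (v true)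
                + dist (f ω (v (rest ⟨pf, hne⟩))) (v false)) := by
            refine Finset.sum_le_sum fun rest _ => ?_
            have h2 : dist x₀ y₀ ≤ dist x₀ (f ω (v (rest ⟨pf, hne⟩)))
                + dist (f ω (v (rest ⟨pf, hne⟩))) y₀ := dist_triangle _ _ _
            have h3 : dist x₀ (f ω (v (rest ⟨pf, hne⟩)))
                = dist (f ω (v (rest ⟨pf, hne⟩))) x₀ := dist_comm _ _
            show r ≤ dist (f ω (v (rest ⟨pf, hne⟩))) x₀
              + dist (f ω (v (rest ⟨pf, hne⟩))) y₀
            rw [← hxy]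
            linarith
        _ = _ := Finset.sum_add_distrib
    -- integrate and choose a good labelling
    have hsum2 : (2^N : ℝ) * r * (volume (SN N)).toReal ≤
        ∑ c : Fin (N+1) → Bool, ∫ ω in SN N, J c ω := by
      rw [← integral_finset_sum _ (fun c _ => (hJci c).integrableOn)]
      have h0 : ∫ _ω in SN N, ((2^N : ℝ) * r) = (2^N : ℝ) * r * (volume (SN N)).toReal := by
        rw [setIntegral_const, smul_eq_mul]; simp only [Measure.real]; ring
      rw [← h0]
      refine setIntegral_mono_on ?_ ?_ (hSNm N) hkey
      · exact integrableOn_const (measure_ne_top _ _)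
      · exact (integrable_finset_sum _ fun c _ => hJci c).integrableOn
    have hcardC : Fintype.card (Fin (N+1) → Bool) = 2^(N+1) := by
      rw [Fintype.card_fun, Fintype.card_bool, Fintype.card_fin]
    obtain ⟨c, hc⟩ : ∃ c : Fin (N+1) → Bool,
        (r/2) * (volume (SN N)).toReal ≤ ∫ ω in SN N, J c ω := by
      by_contra hcon
      push_neg at hcon
      have hlt := Finset.sum_lt_sum_of_nonempty Finset.univ_nonempty
        (fun c (_ : c ∈ Finset.univ) => hcon c)
      rw [Finset.sum_const, Finset.card_univ, hcardC, nsmul_eq_mul] at hlt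
      push_cast at hlt
      have h2 : ((2:ℝ)^(N+1)) * ((r/2) * (volume (SN N)).toReal)
          = (2^N : ℝ) * r * (volume (SN N)).toReal := by ring
      linarith
    -- assemble
    have hJic := hJci c
    have hsplit : ∫ ω, J c ω = (∫ ω in B, J c ω) + ∫ ω in Bᶜ, J c ω :=
      (integral_add_compl hBm hJic).symm
    have hBpart : (r/2) * (volume (SN N)).toReal ≤ ∫ ω in B, J c ω := by
      refine hc.trans (setIntegral_mono_set hJic.integrableOn ?_ ?_)
      · exact ae_of_all _ fun ω => dist_nonneg
      · exact HasSubset.Subset.eventuallyLE (hSN_sub N)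
    have hApart : (∫ ω in A, du ω) - (ε/2) * (volume A).toReal ≤ ∫ ω in Bᶜ, J c ω := by
      have step1 : ∫ ω in A, (du ω - ε/2) ≤ ∫ ω in A, J c ω := by
        refine setIntegral_mono_on ((hdui.sub (integrable_const _)).integrableOn)
          hJic.integrableOn hAm fun ω hω => ?_
        have hωB : ω ∉ B := hA_sub_Bc hω
        have h1 : T.1.symm ω = ω := hfix ω hω.2
        show du ω - ε/2 ≤ dist (f ω ((lab c) (T.1.symm ω))) ((lab c) ω)
        rw [h1, show (lab c) ω = β ω from Set.piecewise_eq_of_notMem _ _ _ hωB]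
        exact (hβspec ω).le
      have step2 : ∫ ω in A, J c ω ≤ ∫ ω in Bᶜ, J c ω :=
        setIntegral_mono_set hJic.integrableOn (ae_of_all _ fun ω => dist_nonneg)
          (HasSubset.Subset.eventuallyLE hA_sub_Bc)
      have step0 : ∫ ω in A, (du ω - ε/2)
          = (∫ ω in A, du ω) - (ε/2) * (volume A).toReal := by
        rw [integral_sub hdui.integrableOn (integrableOn_const (measure_ne_top _ _)),
          setIntegral_const, smul_eq_mul]
        simp only [Measure.real]
        ring
      linarith
    have hle_S : ∫ ω, J c ω ≤ ⨆ α : {a : unitInterval → X // Measurable a},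
        ∫ ω : unitInterval, dist (f ω (α.1 (T.1.symm ω))) (α.1 ω) :=
      le_ciSup hbddS ⟨lab c, hlabm c⟩
    have hμA1 : (volume A).toReal ≤ 1 := by
      have h1 : volume A ≤ volume (Set.univ : Set unitInterval) :=
        measure_mono (Set.subset_univ _)
      have h2 := ENNReal.toReal_mono (measure_ne_top _ _) h1
      simpa using h2
    have hμB0 : (0:ℝ) ≤ (volume B).toReal := ENNReal.toReal_nonneg
    have hμSN0 : (0:ℝ) ≤ (volume (SN N)).toReal := ENNReal.toReal_nonneg
    have hfin : (r/8) * (volume B).toReal ≤ (r/2) * (volume (SN N)).toReal := by nlinarith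
    have hεA : (ε/2) * (volume A).toReal ≤ ε := by nlinarith [ENNReal.toReal_nonneg (a := volume A)]
    calc (r/8) * (volume B).toReal + ∫ ω in A, du ω
        ≤ (r/2) * (volume (SN N)).toReal
            + ((∫ ω in A, du ω) - (ε/2)*(volume A).toReal) + ε := by linarith
      _ ≤ (∫ ω in B, J c ω) + (∫ ω in Bᶜ, J c ω) + ε := by linarith
      _ = (∫ ω, J c ω) + ε := by rw [← hsplit]
      _ ≤ _ + ε := add_le_add_left hle_S ε
  · exact Real.iSup_le hup hInonneg
end
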